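/- Let γ > 1, set m = 1/(γ-1), let K > 0 and 0 < r₀ < R < ∞. Suppose U ∈ C²([r₀, R)) is positive on [r₀, R), satisfies U''(r) + (2/r) U'(r) + K U(r)^m = 0 on (r₀, R), has U'(r₀) < 0, and [r₀, R) is right-maximal in the sense that U cannot be continued as a positive C² solution of this equation to any interval [r₀, R+ε) with ε > 0. Then the limit lim_{r→R⁻} U(r)/(R-r) exists and is a positive real number; consequently ρ := U^{1/(γ-1)} satisfies ρ(r)·(R-r)^{-1/(γ-1)} → C for some constant C > 0 as r → R⁻. -/

import Mathlib

open Real Set Filter Topology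


/-- the RHS of the first-order Lane-Emden system, with time clamped away from 0 -/
noncomputable def leVF (r₀ K m : ℝ) : ℝ → ℝ × ℝ → ℝ × ℝ :=
  fun t p => (p.2, -(2 / max t r₀) * p.2 - K * p.1 ^ m)

theorem rpow_add_bound {a b x c : ℝ} (ha : 0 < a) (hax : a ≤ x) (hxb : x ≤ b) :
    x ^ c ≤ a ^ c + b ^ c := by
  rcases le_or_gt c 0 with hc | hc
  · have h1 : x ^ c ≤ a ^ c := Real.rpow_le_rpow_of_nonpos ha hax hc
    have h2 : (0:ℝ) ≤ b ^ c := Real.rpow_nonneg (le_trans ha.le (hax.trans hxb)) c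
    linarith
  · have h1 : x ^ c ≤ b ^ c := Real.rpow_le_rpow (ha.le.trans hax) hxb hc.le
    have h2 : (0:ℝ) ≤ a ^ c := Real.rpow_nonneg ha.le c
    linarith

theorem rpow_lip {a b m : ℝ} (ha : 0 < a) (hm : 0 < m) {x y : ℝ}
    (hx : x ∈ Icc a b) (hy : y ∈ Icc a b) :
    |x ^ m - y ^ m| ≤ m * (a ^ (m-1) + b ^ (m-1)) * |x - y| := by
  have key := Convex.norm_image_sub_le_of_norm_hasDerivWithin_le
    (f := fun z : ℝ => z ^ m) (f' := fun z : ℝ => m * z ^ (m-1))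
    (C := m * (a ^ (m-1) + b ^ (m-1))) (s := Icc a b) ?_ ?_ (convex_Icc a b) hy hx
  · simpa [Real.norm_eq_abs] using key
  · intro z hz
    exact (Real.hasDerivAt_rpow_const (Or.inl (ha.trans_le hz.1).ne')).hasDerivWithinAt
  · intro z hz
    have : z ^ (m-1) ≤ a ^ (m-1) + b ^ (m-1) := rpow_add_bound ha hz.1 hz.2
    have h0 : (0:ℝ) ≤ z ^ (m-1) := Real.rpow_nonneg (ha.le.trans hz.1) _
    rw [Real.norm_eq_abs, abs_mul, abs_of_pos hm, abs_of_nonneg h0]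
    nlinarith

theorem leVF_lipschitz {r₀ K m : ℝ} (hr₀ : 0 < r₀) (hK : 0 < K) (hm : 0 < m)
    {a b : ℝ} (ha : 0 < a) (hb : 0 < b) (t : ℝ) :
    LipschitzOnWith (Real.toNNReal (1 + 2/r₀ + K * (m * (a ^ (m-1) + b ^ (m-1)))))
      (leVF r₀ K m t) {p : ℝ × ℝ | p.1 ∈ Icc a b} := by
  set M := m * (a ^ (m-1) + b ^ (m-1)) with hM
  have hM0 : 0 ≤ M :=
    mul_nonneg hm.le (add_nonneg (Real.rpow_nonneg ha.le _) (Real.rpow_nonneg hb.le _))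
  have h2r₀ : (0:ℝ) ≤ 2 / r₀ := div_nonneg (by norm_num) hr₀.le
  have hKM : (0:ℝ) ≤ K * M := mul_nonneg hK.le hM0
  have hΛ0 : (0:ℝ) ≤ 1 + 2/r₀ + K * M := by linarith
  rw [lipschitzOnWith_iff_dist_le_mul]
  intro p hp q hq
  rw [Real.coe_toNNReal _ hΛ0]
  have hct : 0 < max t r₀ := lt_max_of_lt_right hr₀
  have hcle : 2 / max t r₀ ≤ 2 / r₀ :=
    div_le_div_of_nonneg_left (by norm_num) hr₀ (le_max_right _ _)
  have hc0 : 0 ≤ 2 / max t r₀ := div_nonneg (by norm_num) hct.le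
  have hd1 : dist p.1 q.1 ≤ dist p q := le_max_left _ _
  have hd2 : dist p.2 q.2 ≤ dist p q := le_max_right _ _
  have hdnn : 0 ≤ dist p q := dist_nonneg
  rw [show dist (leVF r₀ K m t p) (leVF r₀ K m t q)
      = max (dist (leVF r₀ K m t p).1 (leVF r₀ K m t q).1)
            (dist (leVF r₀ K m t p).2 (leVF r₀ K m t q).2) from Prod.dist_eq]
  simp only [leVF]
  rw [max_le_iff]
  constructor
  · calc dist p.2 q.2 ≤ dist p q := hd2
    _ ≤ (1 + 2/r₀ + K * M) * dist p q := by nlinarith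
  · rw [Real.dist_eq]
    have hrp : |p.1 ^ m - q.1 ^ m| ≤ M * |p.1 - q.1| := rpow_lip ha hm hp hq
    have e1 : -(2 / max t r₀) * p.2 - K * p.1 ^ m - (-(2 / max t r₀) * q.2 - K * q.1 ^ m)
        = -((2 / max t r₀) * (p.2 - q.2)) - K * (p.1 ^ m - q.1 ^ m) := by ring
    rw [e1]
    calc |(-((2 / max t r₀) * (p.2 - q.2)) - K * (p.1 ^ m - q.1 ^ m))|
        ≤ |(-((2 / max t r₀) * (p.2 - q.2)))| + |K * (p.1 ^ m - q.1 ^ m)| := abs_sub _ _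
      _ ≤ |(2 / max t r₀) * (p.2 - q.2)| + |K * (p.1 ^ m - q.1 ^ m)| := by rw [abs_neg]
      _ ≤ (2/r₀) * |p.2 - q.2| + K * (M * |p.1 - q.1|) := by
          rw [abs_mul, abs_mul, abs_of_nonneg hc0, abs_of_pos hK]
          have := abs_nonneg (p.2 - q.2)
          gcongr
      _ ≤ (1 + 2/r₀ + K * M) * dist p q := by
          rw [Real.dist_eq] at hd1 hd2
          nlinarith [abs_nonneg (p.2 - q.2), abs_nonneg (p.1 - q.1)]

theorem pl_exists_mem {E : Type*} [NormedAddCommGroup E] [NormedSpace ℝ E] [CompleteSpace E]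
    {v : ℝ → E → E} {tMin t₀ tMax : ℝ} (x₀ : E) {a : ℝ} {L K : NNReal}
    (ht₀ : t₀ ∈ Icc tMin tMax) (ha : 0 ≤ a)
    (hpl : IsPicardLindelof v (tmin := tMin) (tmax := tMax) ⟨t₀, ht₀⟩ x₀ (⟨a, ha⟩ : NNReal) 0 L K) :
    ∃ f : ℝ → E, f t₀ = x₀ ∧ (∀ t ∈ Icc tMin tMax, f t ∈ Metric.closedBall x₀ a) ∧
      ∀ t ∈ Icc tMin tMax, HasDerivWithinAt f (v t (f t)) (Icc tMin tMax) t := by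
  have hx : x₀ ∈ Metric.closedBall x₀ ((0 : NNReal) : ℝ) := Metric.mem_closedBall_self le_rfl
  obtain ⟨α, hα⟩ := ODE.FunSpace.exists_isFixedPt_next hpl hx
  refine ⟨α.compProj, ?_, fun t _ => α.compProj_mem_closedBall hpl.mul_max_le, fun t ht => ?_⟩
  · have h1 := ODE.FunSpace.compProj_val (α := α) (t := ⟨t₀, ht₀⟩)
    rw [h1, ← hα]
    exact ODE.FunSpace.next_apply₀ hpl hx α
  · apply ODE.hasDerivWithinAt_picard_Icc ht₀ hpl.continuousOn_uncurry
      α.continuous_compProj.continuousOn (fun _ _ => α.compProj_mem_closedBall hpl.mul_max_le)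
      x₀ ht |>.congr_of_mem _ ht
    intro t' ht'
    nth_rw 1 [← hα]
    rw [ODE.FunSpace.compProj_of_mem ht']
    rfl

theorem leVF_isPL {r₀ K m : ℝ} (hr₀ : 0 < r₀) (hK : 0 < K) (hm : 0 < m)
    {ρ : ℝ} (hρ : 0 < ρ) (x₀ : ℝ × ℝ) {a b β : ℝ} (ha : 0 < a)
    (h1 : a ≤ x₀.1 - ρ) (h2 : x₀.1 + ρ ≤ b) (h3 : |x₀.2| + ρ ≤ β) (t₀ : ℝ) :
    ∃ f : ℝ → ℝ × ℝ, f t₀ = x₀ ∧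
      (∀ t ∈ Icc t₀ (t₀ + ρ/(β + ((2/r₀) * β + K * (a ^ m + b ^ m)))),
        f t ∈ Metric.closedBall x₀ ρ) ∧
      ∀ t ∈ Icc t₀ (t₀ + ρ/(β + ((2/r₀) * β + K * (a ^ m + b ^ m)))),
        HasDerivWithinAt f (leVF r₀ K m t (f t))
          (Icc t₀ (t₀ + ρ/(β + ((2/r₀) * β + K * (a ^ m + b ^ m))))) t := by
  have hb : 0 < b := lt_of_lt_of_le ha (by linarith)
  have hβ0 : 0 < β := by have := abs_nonneg x₀.2; linarith
  set Cb := β + ((2/r₀) * β + K * (a ^ m + b ^ m)) with hCb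
  have hamp : 0 < a ^ m := Real.rpow_pos_of_pos ha _
  have hbmp : 0 < b ^ m := Real.rpow_pos_of_pos hb _
  have h2r₀ : (0:ℝ) ≤ 2 / r₀ := div_nonneg (by norm_num) hr₀.le
  have hCb0 : 0 < Cb := by
    have : 0 < K * (a ^ m + b ^ m) := by positivity
    have : 0 ≤ (2/r₀) * β := mul_nonneg h2r₀ hβ0.le
    simp only [hCb]; linarith
  have hball : Metric.closedBall x₀ ρ ⊆ {p : ℝ × ℝ | p.1 ∈ Icc a b} := by
    intro p hp
    rw [Metric.mem_closedBall, Prod.dist_eq] at hp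
    have hd1 : dist p.1 x₀.1 ≤ ρ := le_trans (le_max_left _ _) hp
    rw [Real.dist_eq, abs_le] at hd1
    exact ⟨by linarith, by linarith⟩
  have htd : 0 ≤ ρ / Cb := div_nonneg hρ.le hCb0.le
  have ht₀ : t₀ ∈ Icc t₀ (t₀ + ρ/Cb) := ⟨le_refl _, by linarith⟩
  refine pl_exists_mem (L := Cb.toNNReal)
    (K := Real.toNNReal (1 + 2/r₀ + K * (m * (a ^ (m-1) + b ^ (m-1))))) x₀ ht₀ hρ.le ?_
  constructor
  · intro t _
    exact (leVF_lipschitz hr₀ hK hm ha hb t).mono hball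
  · intro x _
    apply Continuous.continuousOn
    have hmx : Continuous fun t : ℝ => max t r₀ := continuous_id.max continuous_const
    have hne : ∀ t : ℝ, max t r₀ ≠ 0 := fun t => (lt_max_of_lt_right hr₀).ne'
    have hc : Continuous fun t : ℝ => -(2 / max t r₀) * x.2 - K * x.1 ^ m := by
      apply Continuous.sub _ continuous_const
      exact ((continuous_const.div hmx hne).neg).mul continuous_const
    exact continuous_const.prodMk hc
  · intro t ht x hx
    rw [Real.coe_toNNReal _ hCb0.le]
    have hx1 : x.1 ∈ Icc a b := hball hx
    have hx2 : |x.2| ≤ β := by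
      rw [Metric.mem_closedBall, Prod.dist_eq] at hx
      have hd2 : dist x.2 x₀.2 ≤ ρ := le_trans (le_max_right _ _) hx
      rw [Real.dist_eq] at hd2
      have := abs_sub_abs_le_abs_sub x.2 x₀.2
      linarith
    have hct : 0 < max t r₀ := lt_max_of_lt_right hr₀
    have hcle : 2 / max t r₀ ≤ 2 / r₀ :=
      div_le_div_of_nonneg_left (by norm_num) hr₀ (le_max_right _ _)
    have hc0 : 0 ≤ 2 / max t r₀ := div_nonneg (by norm_num) hct.le
    have hxm : x.1 ^ m ≤ a ^ m + b ^ m := rpow_add_bound ha hx1.1 hx1.2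
    have hxm0 : 0 ≤ x.1 ^ m := Real.rpow_nonneg (ha.le.trans hx1.1) _
    rw [show ‖leVF r₀ K m t x‖ = max ‖(leVF r₀ K m t x).1‖ ‖(leVF r₀ K m t x).2‖ from rfl]
    simp only [leVF, Real.norm_eq_abs]
    rw [max_le_iff]
    constructor
    · have : 0 ≤ (2/r₀) * β := mul_nonneg h2r₀ hβ0.le
      have : 0 < K * (a ^ m + b ^ m) := by positivity
      have := abs_nonneg x₀.2
      simp only [hCb]
      calc |x.2| ≤ β := hx2
        _ ≤ _ := by linarith
    · calc |(-(2 / max t r₀) * x.2 - K * x.1 ^ m)|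
          ≤ |(-(2 / max t r₀) * x.2)| + |K * x.1 ^ m| := abs_sub _ _
        _ ≤ (2/r₀) * β + K * (a ^ m + b ^ m) := by
            rw [abs_mul, abs_neg, abs_of_nonneg hc0, abs_mul, abs_of_pos hK,
              abs_of_nonneg hxm0]
            have hh1 : (2 / max t r₀) * |x.2| ≤ (2/r₀) * β :=
              mul_le_mul hcle hx2 (abs_nonneg _) h2r₀
            have hh2 : K * x.1 ^ m ≤ K * (a ^ m + b ^ m) :=
              mul_le_mul_of_nonneg_left hxm hK.le
            linarith
        _ ≤ Cb := by simp only [hCb]; linarith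
  · have hmm : max (t₀ + ρ/Cb - t₀) (t₀ - t₀) = ρ/Cb := by
      rw [add_sub_cancel_left, sub_self, max_eq_left htd]
    rw [Real.coe_toNNReal _ hCb0.le, hmm, mul_div_cancel₀ _ hCb0.ne']
    show ρ ≤ ρ - ((0 : NNReal) : ℝ)
    simp

theorem hasDerivAt_pair_fst {f : ℝ → ℝ × ℝ} {p : ℝ × ℝ} {x : ℝ} (h : HasDerivAt f p x) :
    HasDerivAt (fun t => (f t).1) p.1 x := by
  have := ((hasFDerivAt_fst (𝕜 := ℝ) (p := f x)).comp x h.hasFDerivAt).hasDerivAt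
  exact this.congr_deriv (by simp)

theorem hasDerivAt_pair_snd {f : ℝ → ℝ × ℝ} {p : ℝ × ℝ} {x : ℝ} (h : HasDerivAt f p x) :
    HasDerivAt (fun t => (f t).2) p.2 x := by
  have := ((hasFDerivAt_snd (𝕜 := ℝ) (p := f x)).comp x h.hasFDerivAt).hasDerivAt
  exact this.congr_deriv (by simp)

theorem leVF_extension {r₀ R K m : ℝ} {U : ℝ → ℝ}
    (hr₀ : 0 < r₀) (hr₀R : r₀ < R) (hK : 0 < K) (hm : 0 < m)
    (hreg : ContDiffOn ℝ 2 U (Ico r₀ R))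
    (hpos : ∀ r ∈ Ico r₀ R, 0 < U r)
    (hode : ∀ r ∈ Ioo r₀ R,
      deriv (deriv U) r + (2/r) * deriv U r + K * U r ^ m = 0)
    {δ l : ℝ} (hδ : 0 < δ)
    (hUlim : Tendsto U (𝓝[<] R) (𝓝 δ))
    (hU'lim : Tendsto (deriv U) (𝓝[<] R) (𝓝 l)) :
    ∃ (ε : ℝ) (V : ℝ → ℝ), 0 < ε ∧
      ContDiffOn ℝ 2 V (Ico r₀ (R + ε)) ∧
      (∀ r ∈ Ico r₀ (R + ε), 0 < V r) ∧
      Set.EqOn V U (Ico r₀ R) ∧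
      (∀ r ∈ Ioo r₀ (R + ε),
        deriv (deriv V) r + (2/r) * deriv V r + K * V r ^ m = 0) := by
  -- interior regularity of U
  have hU2 : ContDiffOn ℝ 2 U (Ioo r₀ R) := hreg.mono Ioo_subset_Ico_self
  have hUdiff : ∀ r ∈ Ioo r₀ R, HasDerivAt U (deriv U r) r := fun r hr =>
    (((hU2 r hr).contDiffAt (isOpen_Ioo.mem_nhds hr)).differentiableAt
      (by norm_num)).hasDerivAt
  have hdU1 : ContDiffOn ℝ 1 (deriv U) (Ioo r₀ R) :=
    hU2.deriv_of_isOpen isOpen_Ioo (by norm_num)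
  have hdUdiff : ∀ r ∈ Ioo r₀ R, HasDerivAt (deriv U) (deriv (deriv U) r) r := fun r hr =>
    (((hdU1 r hr).contDiffAt (isOpen_Ioo.mem_nhds hr)).differentiableAt one_ne_zero).hasDerivAt
  have hUcont : ContinuousOn U (Ioo r₀ R) := hU2.continuousOn
  have hdUcont : ContinuousOn (deriv U) (Ioo r₀ R) := hdU1.continuousOn
  have hUpair : ∀ t ∈ Ioo r₀ R,
      HasDerivAt (fun s => (U s, deriv U s)) (leVF r₀ K m t (U t, deriv U t)) t := by
    intro t ht
    have hmx : max t r₀ = t := max_eq_left ht.1.le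
    have h2 := hdUdiff t ht
    have hval : deriv (deriv U) t = -(2 / max t r₀) * deriv U t - K * U t ^ m := by
      have := hode t ht
      rw [hmx]
      linarith
    rw [hval] at h2
    exact (hUdiff t ht).prodMk h2
  -- constants
  set ρ : ℝ := δ/2 with hρdef
  have hρ : 0 < ρ := by simp only [hρdef]; linarith
  set a : ℝ := δ - (5/4)*ρ with hadef
  set b : ℝ := δ + (5/4)*ρ with hbdef
  set β : ℝ := |l| + (5/4)*ρ with hβdef
  have hapos : 0 < a := by simp only [hadef, hρdef]; linarith
  have hbpos : 0 < b := by simp only [hbdef]; linarith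
  have hβpos : 0 < β := by have := abs_nonneg l; simp only [hβdef]; linarith
  set Cb : ℝ := β + ((2/r₀) * β + K * (a ^ m + b ^ m)) with hCbdef
  have h2r₀ : (0:ℝ) ≤ 2 / r₀ := div_nonneg (by norm_num) hr₀.le
  have hCb0 : 0 < Cb := by
    have h1 : 0 < K * (a ^ m + b ^ m) := by
      have := Real.rpow_pos_of_pos hapos m
      have := Real.rpow_pos_of_pos hbpos m
      positivity
    have h2 : 0 ≤ (2/r₀) * β := mul_nonneg h2r₀ hβpos.le
    simp only [hCbdef]
    exact add_pos hβpos (add_pos_of_nonneg_of_pos h2 h1)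
  set ε : ℝ := ρ/(2*Cb) with hεdef
  have hε : 0 < ε := by
    have : 0 < ρ/(2*Cb) := div_pos hρ (by linarith)
    simpa [hεdef] using this
  -- choose s₀ close to R
  have hevs : {r | |U r - δ| ≤ ρ/4 ∧ |deriv U r - l| ≤ ρ/4} ∈ 𝓝[<] R := by
    have h1 : ∀ᶠ r in 𝓝[<] R, |U r - δ| ≤ ρ/4 := by
      filter_upwards [Metric.tendsto_nhds.mp hUlim (ρ/4) (by linarith)] with r hr
      rw [Real.dist_eq] at hr; linarith
    have h2 : ∀ᶠ r in 𝓝[<] R, |deriv U r - l| ≤ ρ/4 := by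
      filter_upwards [Metric.tendsto_nhds.mp hU'lim (ρ/4) (by linarith)] with r hr
      rw [Real.dist_eq] at hr; linarith
    exact h1.and h2
  obtain ⟨c, hc, hsub⟩ := (mem_nhdsLT_iff_exists_Ioo_subset' hr₀R).mp hevs
  set A : ℝ := max (max c r₀) (R - ε) with hAdef
  have hAR : A < R := max_lt (max_lt hc hr₀R) (by linarith)
  set s₀ : ℝ := (A + R)/2 with hs₀def
  have hAs₀ : A < s₀ := by simp only [hs₀def]; linarith
  have hs₀R : s₀ < R := by simp only [hs₀def]; linarith
  have hcs₀ : c < s₀ :=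
    lt_of_le_of_lt (le_trans (le_max_left c r₀) (le_max_left _ _)) hAs₀
  have hs₀r₀ : r₀ < s₀ :=
    lt_of_le_of_lt (le_trans (le_max_right c r₀) (le_max_left _ _)) hAs₀
  have hRs₀ : R - s₀ ≤ ε := by
    have : R - ε ≤ A := le_max_right _ _
    linarith
  have hs₀Ioo : s₀ ∈ Ioo r₀ R := ⟨hs₀r₀, hs₀R⟩
  have hprop : ∀ t, s₀ ≤ t → t < R → |U t - δ| ≤ ρ/4 ∧ |deriv U t - l| ≤ ρ/4 :=
    fun t h1t h2t => hsub ⟨lt_of_lt_of_le hcs₀ h1t, h2t⟩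
  set x₀ : ℝ × ℝ := (U s₀, deriv U s₀) with hx₀def
  have hps₀ := hprop s₀ le_rfl hs₀R
  have habs1 := abs_le.mp hps₀.1
  have habs2 := abs_le.mp hps₀.2
  have h1 : a ≤ x₀.1 - ρ := by
    simp only [hx₀def, hadef]; linarith
  have h2 : x₀.1 + ρ ≤ b := by
    simp only [hx₀def, hbdef]; linarith
  have h3 : |x₀.2| + ρ ≤ β := by
    have := abs_sub_abs_le_abs_sub (deriv U s₀) l
    simp only [hx₀def, hβdef]
    linarith [hps₀.2]
  have hpl := leVF_isPL hr₀ hK hm hρ x₀ hapos h1 h2 h3 s₀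
  obtain ⟨y, hy0, hymem, hyd⟩ := hpl
  set tMax : ℝ := s₀ + ρ/Cb with htMaxdef
  have h2ε : 2*ε = ρ/Cb := by
    rw [hεdef]; field_simp
  have hεtMax : R + ε ≤ tMax := by
    simp only [htMaxdef]; linarith
  have hs₀tMax : s₀ < tMax := by
    have : 0 < ρ/Cb := div_pos hρ hCb0
    simp only [htMaxdef]; linarith
  have hRtMax : R < tMax := by linarith
  have hball : Metric.closedBall x₀ ρ ⊆ {p : ℝ × ℝ | p.1 ∈ Icc a b} := by
    intro p hp
    rw [Metric.mem_closedBall, Prod.dist_eq] at hp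
    have hd1 : dist p.1 x₀.1 ≤ ρ := le_trans (le_max_left _ _) hp
    rw [Real.dist_eq, abs_le] at hd1
    exact ⟨by linarith, by linarith⟩
  have hΛlip : ∀ t : ℝ, LipschitzOnWith
      (Real.toNNReal (1 + 2/r₀ + K * (m * (a ^ (m-1) + b ^ (m-1)))))
      (leVF r₀ K m t) (Metric.closedBall x₀ ρ) :=
    fun t => (leVF_lipschitz hr₀ hK hm hapos hbpos t).mono hball
  -- uniqueness: U matches y on [s₀, R)
  have heq : ∀ t ∈ Ico s₀ R, (U t, deriv U t) = y t := by
    intro t ht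
    rcases eq_or_lt_of_le ht.1 with h | hlt
    · rw [← h, hy0]
    · have hsub2 : Icc s₀ t ⊆ Ioo r₀ R := fun u hu =>
        ⟨lt_of_lt_of_le hs₀r₀ hu.1, lt_of_le_of_lt hu.2 ht.2⟩
      have htle : t ≤ tMax := le_of_lt (lt_trans ht.2 hRtMax)
      have cont_f : ContinuousOn (fun s => (U s, deriv U s)) (Icc s₀ t) :=
        (hUcont.mono hsub2).prodMk (hdUcont.mono hsub2)
      have hf' : ∀ u ∈ Ico s₀ t, HasDerivWithinAt (fun s => (U s, deriv U s))
          (leVF r₀ K m u (U u, deriv U u)) (Ici u) u := fun u hu =>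
        (hUpair u (hsub2 ⟨hu.1, hu.2.le⟩)).hasDerivWithinAt
      have hfmem : ∀ u ∈ Ico s₀ t, (U u, deriv U u) ∈ Metric.closedBall x₀ ρ := by
        intro u hu
        have hpu := hprop u hu.1 (lt_trans hu.2 ht.2)
        rw [Metric.mem_closedBall, Prod.dist_eq]
        rw [max_le_iff]
        constructor
        · show dist (U u) x₀.1 ≤ ρ
          rw [Real.dist_eq]
          have t1 := abs_sub (U u - δ) (U s₀ - δ)
          have t2 : U u - U s₀ = (U u - δ) - (U s₀ - δ) := by ring
          rw [show U u - x₀.1 = (U u - δ) - (U s₀ - δ) by simp only [hx₀def]; ring]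
          calc |(U u - δ) - (U s₀ - δ)| ≤ |U u - δ| + |U s₀ - δ| := abs_sub _ _
            _ ≤ ρ := by linarith [hpu.1, hps₀.1]
        · show dist (deriv U u) x₀.2 ≤ ρ
          rw [Real.dist_eq]
          rw [show deriv U u - x₀.2 = (deriv U u - l) - (deriv U s₀ - l) by
            simp only [hx₀def]; ring]
          calc |(deriv U u - l) - (deriv U s₀ - l)|
              ≤ |deriv U u - l| + |deriv U s₀ - l| := abs_sub _ _
            _ ≤ ρ := by linarith [hpu.2, hps₀.2]
      have cont_g : ContinuousOn y (Icc s₀ t) := fun u hu =>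
        ((hyd u ⟨hu.1, le_trans hu.2 htle⟩).continuousWithinAt).mono
          (Icc_subset_Icc le_rfl htle)
      have hg' : ∀ u ∈ Ico s₀ t, HasDerivWithinAt y (leVF r₀ K m u (y u)) (Ici u) u := by
        intro u hu
        have humem : u ∈ Icc s₀ tMax := ⟨hu.1, le_trans hu.2.le htle⟩
        refine (hyd u humem).mono_of_mem_nhdsWithin ?_
        apply mem_nhdsWithin.mpr
        refine ⟨Iio tMax, isOpen_Iio, lt_of_lt_of_le (lt_trans hu.2 ht.2) (le_of_lt hRtMax), ?_⟩
        intro z hz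
        exact ⟨le_trans hu.1 hz.2, hz.1.le⟩
      have hgmem : ∀ u ∈ Ico s₀ t, y u ∈ Metric.closedBall x₀ ρ := fun u hu =>
        hymem u ⟨hu.1, le_trans hu.2.le htle⟩
      have huniq := ODE_solution_unique_of_mem_Icc_right
        (s := fun _ => Metric.closedBall x₀ ρ) (fun t _ => hΛlip t)
        cont_f hf' hfmem cont_g hg' hgmem (by rw [hy0])
      exact huniq ⟨ht.1, le_rfl⟩
  set y₁ : ℝ → ℝ := fun t => (y t).1 with hy₁def
  set y₂ : ℝ → ℝ := fun t => (y t).2 with hy₂def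
  set J : Set ℝ := Ioo s₀ tMax with hJdef
  have hyJ : ∀ t ∈ J, HasDerivAt y (leVF r₀ K m t (y t)) t := fun t ht =>
    (hyd t ⟨ht.1.le, ht.2.le⟩).hasDerivAt (Icc_mem_nhds ht.1 ht.2)
  have hy₁d : ∀ t ∈ J, HasDerivAt y₁ (y₂ t) t := fun t ht =>
    hasDerivAt_pair_fst (hyJ t ht)
  have hy₂d : ∀ t ∈ J, HasDerivAt y₂ (-(2/t) * y₂ t - K * y₁ t ^ m) t := by
    intro t ht
    have h := hasDerivAt_pair_snd (hyJ t ht)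
    have hmx : max t r₀ = t := max_eq_left (le_of_lt (lt_trans hs₀r₀ ht.1))
    simpa [leVF, hmx, hy₁def, hy₂def] using h
  have hy₁C2 : ContDiffOn ℝ 2 y₁ J := by
    rw [show (2 : WithTop ℕ∞) = 1 + 1 by norm_num,
      contDiffOn_succ_iff_deriv_of_isOpen isOpen_Ioo]
    refine ⟨fun t ht => (hy₁d t ht).differentiableAt.differentiableWithinAt, by simp, ?_⟩
    have hdy₁ : ∀ t ∈ J, deriv y₁ t = y₂ t := fun t ht => (hy₁d t ht).deriv
    refine ContDiffOn.congr ?_ hdy₁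
    rw [show (1 : WithTop ℕ∞) = 0 + 1 by norm_num,
      contDiffOn_succ_iff_deriv_of_isOpen isOpen_Ioo]
    refine ⟨fun t ht => (hy₂d t ht).differentiableAt.differentiableWithinAt, by simp, ?_⟩
    rw [contDiffOn_zero]
    have hdy₂ : ∀ t ∈ J, deriv y₂ t = -(2/t) * y₂ t - K * y₁ t ^ m := fun t ht =>
      (hy₂d t ht).deriv
    refine ContinuousOn.congr ?_ hdy₂
    have hcy₁ : ContinuousOn y₁ J := fun t ht =>
      (hy₁d t ht).continuousAt.continuousWithinAt
    have hcy₂ : ContinuousOn y₂ J := fun t ht =>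
      (hy₂d t ht).continuousAt.continuousWithinAt
    have ht0 : ∀ t ∈ J, t ≠ 0 := fun t ht =>
      (lt_trans hr₀ (lt_trans hs₀r₀ ht.1)).ne'
    exact (((continuousOn_const.div continuousOn_id ht0).neg.mul hcy₂).sub
      (continuousOn_const.mul (hcy₁.rpow_const (fun t _ => Or.inr hm.le))))
  set V : ℝ → ℝ := fun r => if r < R then U r else y₁ r with hVdef
  have hVeqU : Set.EqOn V U (Ico r₀ R) := fun x hx => if_pos hx.2
  have hVeqy : Set.EqOn V y₁ J := by
    intro x hx
    by_cases hxR : x < R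
    · have hx' := heq x ⟨hx.1.le, hxR⟩
      have : V x = U x := if_pos hxR
      rw [this]
      exact congrArg Prod.fst hx'
    · exact if_neg hxR
  refine ⟨ε, V, hε, ?_, ?_, hVeqU, ?_⟩
  · -- smoothness
    intro r hr
    rcases lt_or_ge r R with hrR | hrR
    · have hA1 : ContDiffWithinAt ℝ 2 U (Ico r₀ R) r := hreg r ⟨hr.1, hrR⟩
      have hA2 : ContDiffWithinAt ℝ 2 V (Ico r₀ R) r :=
        hA1.congr (fun x hx => hVeqU hx) (hVeqU ⟨hr.1, hrR⟩)
      have hseteq : Ico r₀ R = Ico r₀ (R + ε) ∩ Iio R := by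
        ext x
        constructor
        · intro hx; exact ⟨⟨hx.1, lt_trans hx.2 (by linarith)⟩, hx.2⟩
        · intro hx; exact ⟨hx.1.1, hx.2⟩
      rw [hseteq] at hA2
      exact (contDiffWithinAt_inter (isOpen_Iio.mem_nhds hrR)).mp hA2
    · have hrJ : r ∈ J := ⟨lt_of_lt_of_le hs₀R hrR, lt_of_lt_of_le hr.2 hεtMax⟩
      have hA1 : ContDiffAt ℝ 2 y₁ r := (hy₁C2 r hrJ).contDiffAt (isOpen_Ioo.mem_nhds hrJ)
      exact (hA1.congr_of_eventuallyEq
        (eventuallyEq_of_mem (isOpen_Ioo.mem_nhds hrJ) hVeqy)).contDiffWithinAt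
  · -- positivity
    intro r hr
    rcases lt_or_ge r R with hrR | hrR
    · rw [hVeqU ⟨hr.1, hrR⟩]
      exact hpos r ⟨hr.1, hrR⟩
    · have hVr : V r = y₁ r := if_neg (not_lt.mpr hrR)
      rw [hVr]
      have hmem := hball (hymem r ⟨le_of_lt (lt_of_lt_of_le hs₀R hrR),
        le_of_lt (lt_of_lt_of_le hr.2 hεtMax)⟩)
      exact lt_of_lt_of_le hapos hmem.1
  · -- ODE
    intro r hr
    rcases lt_or_ge r R with hrR | hrR
    · have hEv : V =ᶠ[𝓝 r] U :=
        eventuallyEq_of_mem (isOpen_Iio.mem_nhds hrR) (fun x (hx : x < R) => if_pos hx)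
      have e1 : deriv V r = deriv U r := hEv.deriv_eq
      have e2 : deriv (deriv V) r = deriv (deriv U) r :=
        Filter.EventuallyEq.deriv_eq hEv.deriv
      have hVr : V r = U r := if_pos hrR
      rw [e2, e1, hVr]
      exact hode r ⟨hr.1, hrR⟩
    · have hrJ : r ∈ J := ⟨lt_of_lt_of_le hs₀R hrR, lt_of_lt_of_le hr.2 hεtMax⟩
      have hEv : V =ᶠ[𝓝 r] y₁ := eventuallyEq_of_mem (isOpen_Ioo.mem_nhds hrJ) hVeqy
      have e1 : deriv V r = deriv y₁ r := hEv.deriv_eq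
      have e2 : deriv (deriv V) r = deriv (deriv y₁) r :=
        Filter.EventuallyEq.deriv_eq hEv.deriv
      have e3 : deriv y₁ r = y₂ r := (hy₁d r hrJ).deriv
      have hEv2 : deriv y₁ =ᶠ[𝓝 r] y₂ :=
        eventuallyEq_of_mem (isOpen_Ioo.mem_nhds hrJ) (fun t ht => (hy₁d t ht).deriv)
      have e4 : deriv (deriv y₁) r = deriv y₂ r := hEv2.deriv_eq
      have e5 : deriv y₂ r = -(2/r) * y₂ r - K * y₁ r ^ m := (hy₂d r hrJ).deriv
      have hVr : V r = y₁ r := hVeqy hrJ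
      rw [e2, e4, e5, e1, e3, hVr]
      ring

set_option maxHeartbeats 1600000 in
/-- **Appendix 1**: boundary asymptotics at the vacuum boundary for the Lane–Emden
equation.  If `U ∈ C²([r₀,R))` is positive, solves `U'' + (2/r)U' + K U^m = 0`
(`m = 1/(γ-1)`) on `(r₀,R)`, has `U'(r₀) < 0`, and `[r₀,R)` is a right-maximal
interval of existence of a positive solution, then `U(r)/(R-r)` tends to a positive
limit as `r → R⁻`; consequently `ρ = U^{1/(γ-1)}` satisfies
`ρ(r)·(R-r)^{-1/(γ-1)} → C > 0`. -/
theorem laneEmden_boundary_asymptotics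
    (γ K r₀ R : ℝ) (U : ℝ → ℝ)
    (hγ : 1 < γ) (hK : 0 < K) (hr₀ : 0 < r₀) (hr₀R : r₀ < R)
    (hreg : ContDiffOn ℝ 2 U (Ico r₀ R))
    (hpos : ∀ r ∈ Ico r₀ R, 0 < U r)
    (hode : ∀ r ∈ Ioo r₀ R,
      deriv (deriv U) r + (2/r) * deriv U r + K * U r ^ (1/(γ-1)) = 0)
    (hU' : derivWithin U (Ici r₀) r₀ < 0)
    (hmax : ¬ ∃ (ε : ℝ) (V : ℝ → ℝ), 0 < ε ∧
      ContDiffOn ℝ 2 V (Ico r₀ (R + ε)) ∧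
      (∀ r ∈ Ico r₀ (R + ε), 0 < V r) ∧
      Set.EqOn V U (Ico r₀ R) ∧
      (∀ r ∈ Ioo r₀ (R + ε),
        deriv (deriv V) r + (2/r) * deriv V r + K * V r ^ (1/(γ-1)) = 0)) :
    ∃ L > 0, Tendsto (fun r => U r / (R - r)) (𝓝[<] R) (𝓝 L) ∧
      ∃ C > 0, Tendsto (fun r => U r ^ (1/(γ-1)) * (R - r) ^ (-(1/(γ-1))))
        (𝓝[<] R) (𝓝 C) := by
  set m : ℝ := 1/(γ-1) with hmdef
  have hm : 0 < m := by
    rw [hmdef]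
    exact div_pos one_pos (by linarith)
  have hR0 : 0 < R := lt_trans hr₀ hr₀R
  -- interior regularity of U
  have hU2 : ContDiffOn ℝ 2 U (Ioo r₀ R) := hreg.mono Ioo_subset_Ico_self
  have hUdiff : ∀ r ∈ Ioo r₀ R, HasDerivAt U (deriv U r) r := fun r hr =>
    (((hU2 r hr).contDiffAt (isOpen_Ioo.mem_nhds hr)).differentiableAt
      (by norm_num)).hasDerivAt
  have hdU1 : ContDiffOn ℝ 1 (deriv U) (Ioo r₀ R) :=
    hU2.deriv_of_isOpen isOpen_Ioo (by norm_num)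
  have hdUdiff : ∀ r ∈ Ioo r₀ R, HasDerivAt (deriv U) (deriv (deriv U) r) r := fun r hr =>
    (((hdU1 r hr).contDiffAt (isOpen_Ioo.mem_nhds hr)).differentiableAt one_ne_zero).hasDerivAt
  have hUcont : ContinuousOn U (Ioo r₀ R) := hU2.continuousOn
  have hdUcont : ContinuousOn (deriv U) (Ioo r₀ R) := hdU1.continuousOn
  -- Step 1: find r₁ ∈ (r₀, R) where deriv U < 0
  have hsets : Ico r₀ R =ᶠ[𝓝 r₀] Ici r₀ := by
    filter_upwards [isOpen_Iio.mem_nhds hr₀R] with x (hx : x < R)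
    simp only [eq_iff_iff]
    exact ⟨fun h => h.1, fun h => ⟨h, hx⟩⟩
  have hdiffW : DifferentiableWithinAt ℝ U (Ico r₀ R) r₀ :=
    (hreg r₀ ⟨le_rfl, hr₀R⟩).differentiableWithinAt (by norm_num)
  have hDW2 : HasDerivWithinAt U (derivWithin U (Ici r₀) r₀) (Ici r₀) r₀ := by
    have h1 := hdiffW.hasDerivWithinAt.congr_set hsets
    rwa [derivWithin_congr_set hsets] at h1
  have hslope : Tendsto (slope U r₀) (𝓝[>] r₀) (𝓝 (derivWithin U (Ici r₀) r₀)) := by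
    have := hasDerivWithinAt_iff_tendsto_slope.mp hDW2
    rwa [Set.Ici_sdiff_left] at this
  have hltev : ∀ᶠ x in 𝓝[>] r₀, slope U r₀ x < 0 := hslope.eventually_lt_const hU'
  have hmem2 : ∀ᶠ x in 𝓝[>] r₀, x ∈ Ioo r₀ R := Ioo_mem_nhdsGT hr₀R
  obtain ⟨x, hx1, hx2⟩ := (hltev.and hmem2).exists
  have hUx : U x < U r₀ := by
    rw [slope_def_field] at hx1
    have hxr₀ : 0 < x - r₀ := by linarith [hx2.1]
    nlinarith [(div_lt_iff₀ hxr₀).mp hx1]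
  obtain ⟨r₁, hr₁x, hr₁eq⟩ := exists_hasDerivAt_eq_slope U (deriv U) hx2.1
    (hreg.continuousOn.mono (fun y hy => ⟨hy.1, lt_of_le_of_lt hy.2 hx2.2⟩))
    (fun y hy => hUdiff y ⟨hy.1, lt_trans hy.2 hx2.2⟩)
  have hr₁ : r₁ ∈ Ioo r₀ R := ⟨hr₁x.1, lt_trans hr₁x.2 hx2.2⟩
  have hr₁' : deriv U r₁ < 0 := by
    rw [hr₁eq]
    exact div_neg_of_neg_of_pos (by linarith) (by linarith [hx2.1])
  have hr₁pos : 0 < r₁ := lt_trans hr₀ hr₁.1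
  have hIcoIoo : Ico r₁ R ⊆ Ioo r₀ R := fun y hy => ⟨lt_of_lt_of_le hr₁.1 hy.1, hy.2⟩
  -- Step 2 : W := r² U' is antitone
  set W : ℝ → ℝ := fun r => r^2 * deriv U r with hWdef
  have hWd : ∀ r ∈ Ioo r₀ R, HasDerivAt W (-(K * (r^2 * U r ^ m))) r := by
    intro r hr
    have hrpos : 0 < r := lt_trans hr₀ hr.1
    have h1 : HasDerivAt (fun s : ℝ => s^2) (2*r) r := by
      simpa using hasDerivAt_pow 2 r
    have h2 := h1.mul (hdUdiff r hr)
    have hU'' : deriv (deriv U) r = -(2/r) * deriv U r - K * U r ^ m := by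
      have := hode r hr; linarith
    rw [hU''] at h2
    refine h2.congr_deriv ?_
    field_simp
    ring
  have hWanti : AntitoneOn W (Ico r₁ R) := by
    apply antitoneOn_of_deriv_nonpos (convex_Ico r₁ R)
    · exact ((continuous_pow 2).continuousOn.mul (hdUcont.mono hIcoIoo))
    · intro s hs
      rw [interior_Ico] at hs
      exact (hWd s (hIcoIoo (Ioo_subset_Ico_self hs))).differentiableAt.differentiableWithinAt
    · intro s hs
      rw [interior_Ico] at hs
      have hs' := hIcoIoo (Ioo_subset_Ico_self hs)
      rw [(hWd s hs').deriv]
      have h1 : 0 < s^2 := pow_pos (lt_trans hr₀ hs'.1) 2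
      have h2 : 0 < U s ^ m := Real.rpow_pos_of_pos (hpos s (Ioo_subset_Ico_self hs')) m
      have h3 : 0 ≤ K * (s^2 * U s ^ m) := le_of_lt (mul_pos hK (mul_pos h1 h2))
      linarith
  have hW1neg : W r₁ < 0 := mul_neg_of_pos_of_neg (pow_pos hr₁pos 2) hr₁'
  set c : ℝ := -(W r₁)/R^2 with hcdef
  have hc0 : 0 < c := div_pos (neg_pos.mpr hW1neg) (pow_pos hR0 2)
  have hWr₁ : W r₁ = -c * R^2 := by
    rw [hcdef]
    field_simp
  have hU'le : ∀ r ∈ Ico r₁ R, deriv U r ≤ -c := by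
    intro r hr
    have hWle : W r ≤ W r₁ := hWanti ⟨le_rfl, hr₁.2⟩ hr hr.1
    have hrpos : 0 < r := lt_of_lt_of_le hr₁pos hr.1
    have hr2 : 0 < r^2 := pow_pos hrpos 2
    have hrR2 : r^2 ≤ R^2 := by nlinarith [hr.2]
    have hWr : W r = r^2 * deriv U r := rfl
    nlinarith [hWle, hWr₁, hc0]
  -- Step 3 : energy bound, lower bound on U'
  set E : ℝ → ℝ := fun r => (deriv U r)^2/2 + (K/(m+1)) * (U r)^(m+1) with hEdef
  have hm1 : m + 1 ≠ 0 := by linarith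
  have hEd : ∀ r ∈ Ioo r₀ R, HasDerivAt E (-(2/r) * (deriv U r)^2) r := by
    intro r hr
    have hrpos : 0 < r := lt_trans hr₀ hr.1
    have h1 := ((hdUdiff r hr).pow 2).div_const 2
    have h2 := (HasDerivAt.rpow_const (p := m+1) (hUdiff r hr)
      (Or.inl (hpos r (Ioo_subset_Ico_self hr)).ne')).const_mul (K/(m+1))
    have hsum := h1.add h2
    have hU'' : deriv (deriv U) r = -(2/r) * deriv U r - K * U r ^ m := by
      have := hode r hr; linarith
    have hexp : m + 1 - 1 = m := by ring
    rw [hU'', hexp] at hsum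
    refine hsum.congr_deriv ?_
    field_simp
    ring
  have hEanti : AntitoneOn E (Ico r₁ R) := by
    apply antitoneOn_of_deriv_nonpos (convex_Ico r₁ R)
    · apply ContinuousOn.add
      · exact ((hdUcont.mono hIcoIoo).pow 2).div_const 2
      · exact continuousOn_const.mul ((hUcont.mono hIcoIoo).rpow_const
          (fun y _ => Or.inr (by linarith)))
    · intro s hs
      rw [interior_Ico] at hs
      exact (hEd s (hIcoIoo (Ioo_subset_Ico_self hs))).differentiableAt.differentiableWithinAt
    · intro s hs
      rw [interior_Ico] at hs
      have hs' := hIcoIoo (Ioo_subset_Ico_self hs)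
      rw [(hEd s hs').deriv]
      have h1 : 0 < 2/s := div_pos (by norm_num) (lt_trans hr₀ hs'.1)
      nlinarith [sq_nonneg (deriv U s)]
  set B : ℝ := Real.sqrt (2 * E r₁) with hBdef
  have hB0 : 0 ≤ B := Real.sqrt_nonneg _
  have hBle : ∀ r ∈ Ico r₁ R, -B ≤ deriv U r := by
    intro r hr
    have hEle : E r ≤ E r₁ := hEanti ⟨le_rfl, hr₁.2⟩ hr hr.1
    have hterm : 0 ≤ (K/(m+1)) * (U r)^(m+1) := by
      have h1 : 0 ≤ K/(m+1) := div_nonneg hK.le (by linarith)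
      have h2 : 0 ≤ (U r)^(m+1) :=
        Real.rpow_nonneg (hpos r (Ico_subset_Ico_left hr₁.1.le hr)).le _
      exact mul_nonneg h1 h2
    have hsq : (deriv U r)^2 ≤ 2 * E r₁ := by
      have h := hEle
      simp only [hEdef] at h ⊢
      linarith
    have habs : |deriv U r| ≤ B := by
      rw [hBdef, ← Real.sqrt_sq_eq_abs]
      exact Real.sqrt_le_sqrt hsq
    linarith [neg_abs_le (deriv U r)]
  -- Step 4 : limits of W, deriv U, U at R⁻
  have hIooNe : (Ioo r₁ R).Nonempty :=
    ⟨(r₁ + R)/2, by rw [Set.mem_Ioo]; constructor <;> linarith [hr₁.2]⟩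
  have hWbdd : BddBelow (W '' Ioo r₁ R) := by
    refine ⟨-(R^2 * B), ?_⟩
    rintro _ ⟨s, hs, rfl⟩
    have hs2 : (0:ℝ) ≤ s^2 := sq_nonneg s
    have hsR2 : s^2 ≤ R^2 := by nlinarith [hs.2, lt_of_lt_of_le hr₁pos hs.1.le]
    have h1 : -B ≤ deriv U s := hBle s (Ioo_subset_Ico_self hs)
    have : s^2 * (-B) ≤ s^2 * deriv U s := mul_le_mul_of_nonneg_left h1 hs2
    have h2 : -(R^2 * B) ≤ s^2 * (-B) := by nlinarith
    exact le_trans h2 this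
  have hWtendsto : Tendsto W (𝓝[<] R) (𝓝 (sInf (W '' Ioo r₁ R))) :=
    AntitoneOn.tendsto_nhdsWithin_Ioo_left hIooNe
      (hWanti.mono Ioo_subset_Ico_self) hWbdd
  set w : ℝ := sInf (W '' Ioo r₁ R) with hwdef
  set l : ℝ := w / R^2 with hldef
  have hIooF : Ioo r₁ R ∈ 𝓝[<] R := Ioo_mem_nhdsLT hr₁.2
  have hU'tendsto : Tendsto (deriv U) (𝓝[<] R) (𝓝 l) := by
    have h1 : Tendsto (fun r : ℝ => r^2) (𝓝[<] R) (𝓝 (R^2)) :=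
      ((continuous_pow 2).tendsto R).mono_left nhdsWithin_le_nhds
    have h2 : Tendsto (fun r => W r / r^2) (𝓝[<] R) (𝓝 (w / R^2)) :=
      hWtendsto.div h1 (by positivity)
    refine h2.congr' ?_
    filter_upwards [hIooF] with s hs
    have hspos : 0 < s := lt_of_lt_of_le hr₁pos hs.1.le
    have : W s = s^2 * deriv U s := rfl
    rw [this]
    field_simp
  have hlle : l ≤ -c := by
    apply le_of_tendsto hU'tendsto
    filter_upwards [hIooF] with s hs
    exact hU'le s (Ioo_subset_Ico_self hs)
  set L : ℝ := -l with hLdef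
  have hL : 0 < L := by simp only [hLdef]; linarith
  -- limit of U
  have hUanti : AntitoneOn U (Ico r₁ R) := by
    apply antitoneOn_of_deriv_nonpos (convex_Ico r₁ R)
    · exact hUcont.mono hIcoIoo
    · intro s hs
      rw [interior_Ico] at hs
      exact (hUdiff s (hIcoIoo (Ioo_subset_Ico_self hs))).differentiableAt.differentiableWithinAt
    · intro s hs
      rw [interior_Ico] at hs
      linarith [hU'le s (Ioo_subset_Ico_self hs), hc0]
  have hUbdd : BddBelow (U '' Ioo r₁ R) := by
    refine ⟨0, ?_⟩
    rintro _ ⟨s, hs, rfl⟩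
    exact (hpos s (Ico_subset_Ico_left hr₁.1.le (Ioo_subset_Ico_self hs))).le
  have hUtendsto : Tendsto U (𝓝[<] R) (𝓝 (sInf (U '' Ioo r₁ R))) :=
    AntitoneOn.tendsto_nhdsWithin_Ioo_left hIooNe
      (hUanti.mono Ioo_subset_Ico_self) hUbdd
  set δ : ℝ := sInf (U '' Ioo r₁ R) with hδdef
  have hδ0 : 0 ≤ δ := by
    apply le_csInf (hIooNe.image U)
    rintro _ ⟨s, hs, rfl⟩
    exact (hpos s (Ico_subset_Ico_left hr₁.1.le (Ioo_subset_Ico_self hs))).le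
  -- Step 5 : δ = 0 by maximality
  have hδeq : δ = 0 := by
    by_contra hne
    have hδpos : 0 < δ := lt_of_le_of_ne hδ0 (Ne.symm hne)
    exact hmax (leVF_extension hr₀ hr₀R hK hm hreg hpos hode hδpos hUtendsto hU'tendsto)
  have hU0 : Tendsto U (𝓝[<] R) (𝓝 0) := hδeq ▸ hUtendsto
  -- Step 6 : the limit of U r / (R - r)
  have hfrac : Tendsto (fun r => U r / (R - r)) (𝓝[<] R) (𝓝 L) := by
    rw [Metric.tendsto_nhds]
    intro η hη
    set ε' : ℝ := η/2 with hε'def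
    have hε' : 0 < ε' := by simp only [hε'def]; linarith
    have hev : ∀ᶠ s in 𝓝[<] R, |deriv U s - l| < ε' := by
      filter_upwards [Metric.tendsto_nhds.mp hU'tendsto ε' hε'] with s hs
      rwa [Real.dist_eq] at hs
    obtain ⟨r₂, hr₂R, hsub₂⟩ := (mem_nhdsLT_iff_exists_Ioo_subset' hr₀R).mp hev
    set r₃ : ℝ := max r₂ r₁ with hr₃def
    have hr₃R : r₃ < R := max_lt hr₂R hr₁.2
    filter_upwards [Ioo_mem_nhdsLT hr₃R] with r hr
    have hrR : r < R := hr.2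
    have hRr : 0 < R - r := by linarith
    have hr₁r : r₁ < r := lt_of_le_of_lt (le_max_right r₂ r₁) hr.1
    have hr₂r : r₂ < r := lt_of_le_of_lt (le_max_left r₂ r₁) hr.1
    have hr₀r : r₀ < r := lt_trans hr₁.1 hr₁r
    have hb1 : ∀ r' ∈ Ioo r R, U r - U r' ≤ (L + ε')*(r' - r) ∧
        (L - ε')*(r' - r) ≤ U r - U r' := by
      intro r' hr'
      have hrr' : r < r' := hr'.1
      have hIccsub : Icc r r' ⊆ Ioo r₀ R := fun y hy =>
        ⟨lt_of_lt_of_le hr₀r hy.1, lt_of_le_of_lt hy.2 hr'.2⟩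
      obtain ⟨ξ, hξ, hξeq⟩ := exists_hasDerivAt_eq_slope U (deriv U) hrr'
        (hUcont.mono hIccsub) (fun y hy => hUdiff y (hIccsub ⟨hy.1.le, hy.2.le⟩))
      have hξS : |deriv U ξ - l| < ε' :=
        hsub₂ ⟨lt_trans hr₂r hξ.1, lt_trans hξ.2 hr'.2⟩
      rw [abs_lt] at hξS
      have hr'r : 0 < r' - r := by linarith
      rw [eq_div_iff hr'r.ne'] at hξeq
      have hlL : l = -L := by simp only [hLdef]; ring
      rw [hlL] at hξS
      constructor
      · have h1 : -(deriv U ξ) ≤ L + ε' := by linarith [hξS.1]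
        have h2 := mul_le_mul_of_nonneg_right h1 hr'r.le
        linarith [hξeq, h2]
      · have h1 : L - ε' ≤ -(deriv U ξ) := by linarith [hξS.2]
        have h2 := mul_le_mul_of_nonneg_right h1 hr'r.le
        linarith [hξeq, h2]
    have ht1 : Tendsto (fun r' => U r - U r') (𝓝[<] R) (𝓝 (U r - 0)) :=
      tendsto_const_nhds.sub hU0
    have ht2 : Tendsto (fun r' => (L + ε')*(r' - r)) (𝓝[<] R) (𝓝 ((L + ε')*(R - r))) :=
      ((continuous_const.mul (continuous_id.sub continuous_const)).tendsto R).mono_left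
        nhdsWithin_le_nhds
    have ht3 : Tendsto (fun r' => (L - ε')*(r' - r)) (𝓝[<] R) (𝓝 ((L - ε')*(R - r))) :=
      ((continuous_const.mul (continuous_id.sub continuous_const)).tendsto R).mono_left
        nhdsWithin_le_nhds
    have hub : U r - 0 ≤ (L + ε')*(R - r) := by
      apply le_of_tendsto_of_tendsto ht1 ht2
      filter_upwards [Ioo_mem_nhdsLT hrR] with r' hr'
      exact (hb1 r' hr').1
    have hlb : (L - ε')*(R - r) ≤ U r - 0 := by
      apply le_of_tendsto_of_tendsto ht3 ht1
      filter_upwards [Ioo_mem_nhdsLT hrR] with r' hr'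
      exact (hb1 r' hr').2
    rw [Real.dist_eq, abs_lt]
    constructor
    · have : L - ε' ≤ U r / (R - r) := (le_div_iff₀ hRr).mpr (by linarith)
      simp only [hε'def] at this ⊢
      linarith
    · have : U r / (R - r) ≤ L + ε' := (div_le_iff₀ hRr).mpr (by linarith)
      simp only [hε'def] at this ⊢
      linarith
  refine ⟨L, hL, hfrac, L ^ m, Real.rpow_pos_of_pos hL m, ?_⟩
  have htend2 : Tendsto (fun r => (U r / (R - r)) ^ m) (𝓝[<] R) (𝓝 (L ^ m)) :=
    hfrac.rpow_const (Or.inr hm.le)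
  refine htend2.congr' ?_
  filter_upwards [hIooF] with r hr
  have hUr : 0 ≤ U r := (hpos r (Ico_subset_Ico_left hr₁.1.le (Ioo_subset_Ico_self hr))).le
  have hRr : 0 ≤ R - r := by linarith [hr.2]
  rw [Real.div_rpow hUr hRr, Real.rpow_neg hRr, div_eq_mul_inv]
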